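/- Let d ≥ 1 and let F be a field whose characteristic is either zero or greater than d. Let ḡ ∈ F[y] be a monic polynomial of degree d, let c ∈ F be nonzero, and let t be a new variable. Consider h := Res( ḡ + c·t, ḡ′ ), the resultant in y over F(t) of the degree-d polynomial ḡ + c·t and the derivative ḡ′ = dḡ/dy (which has degree d−1). Then h lies in F[t] and has degree exactly d−1 as a polynomial in t; in particular h ≠ 0. Moreover, with the convention that the resultant is the determinant of the Sylvester matrix, the coefficient of t^{d−1} in h equals c^{d−1}·d^d. -/
import Mathlib


/-- The Sylvester matrix of `f` and `g` with respect to degrees `d₁` and `d₂`: the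
`(d₁+d₂) × (d₁+d₂)` matrix whose first `d₂` columns are the shifted coefficient vectors
of `f` and whose last `d₁` columns are the shifted coefficient vectors of `g`. -/
def sylvesterMatrix {R : Type*} [CommRing R] (d₁ d₂ : ℕ) (f g : Polynomial R) :
    Matrix (Fin (d₁ + d₂)) (Fin (d₁ + d₂)) R :=
  Matrix.of fun i j =>
    if (j : ℕ) < d₂ then
      (if (j : ℕ) ≤ (i : ℕ) then f.coeff ((i : ℕ) - (j : ℕ)) else 0)
    else
      (if (j : ℕ) - d₂ ≤ (i : ℕ) then g.coeff ((i : ℕ) - ((j : ℕ) - d₂)) else 0)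

/-- The resultant of two univariate polynomials `f` and `g`: the determinant of their
Sylvester matrix (taken with respect to their degrees). -/
noncomputable def resultant {R : Type*} [CommRing R] (f g : Polynomial R) : R :=
  (sylvesterMatrix f.natDegree g.natDegree f g).det

open Polynomial Matrix in
theorem aux_det (F : Type) [Field F] (d : ℕ) (hd : 1 ≤ d) (hdF : (d : F) ≠ 0)
    (g : Polynomial F) (hmonic : g.Monic) (hdeg : g.natDegree = d)
    (c : F) (hc : c ≠ 0) :
    ∃ Q : Polynomial F, Q.Monic ∧ Q.natDegree = d - 1 ∧
      (sylvesterMatrix d (d - 1)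
          (g.map Polynomial.C + Polynomial.C (Polynomial.C c * Polynomial.X))
          ((derivative g).map Polynomial.C)).det
        = Polynomial.C ((d : F) ^ d * c ^ (d - 1)) * Q := by
  classical
  set f₀ : Polynomial (Polynomial F) :=
    g.map Polynomial.C + Polynomial.C (Polynomial.C c * Polynomial.X) with hf₀
  set g₀ : Polynomial (Polynomial F) := (derivative g).map Polynomial.C with hg₀
  set M := sylvesterMatrix d (d - 1) f₀ g₀ with hM
  set A11 : Matrix (Fin (d-1)) (Fin (d-1)) F :=
    Matrix.of (fun i j => if (j:ℕ) ≤ (i:ℕ) then g.coeff ((i:ℕ) - (j:ℕ)) else 0) with hA11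
  set A12 : Matrix (Fin (d-1)) (Fin d) F :=
    Matrix.of (fun i j => if (j:ℕ) ≤ (i:ℕ) then (derivative g).coeff ((i:ℕ) - (j:ℕ)) else 0) with hA12
  set A21 : Matrix (Fin d) (Fin (d-1)) F :=
    Matrix.of (fun i j => g.coeff (d - 1 + (i:ℕ) - (j:ℕ))) with hA21
  set A22 : Matrix (Fin d) (Fin d) F :=
    Matrix.of (fun i j => (derivative g).coeff (d - 1 + (i:ℕ) - (j:ℕ))) with hA22
  have hderle : (derivative g).natDegree ≤ d - 1 := by
    simpa [hdeg] using g.natDegree_derivative_le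
  have hcoeffder : (derivative g).coeff (d - 1) = (d : F) := by
    rw [coeff_derivative]
    have h1 : d - 1 + 1 = d := by omega
    have h2 : ((d - 1 : ℕ) : F) + 1 = (d : F) := by
      have : (((d - 1) + 1 : ℕ) : F) = (d : F) := by rw [h1]
      push_cast at this
      exact_mod_cast this
    rw [h2]
    have : g.coeff (d - 1 + 1) = 1 := by rw [h1, ← hdeg]; exact hmonic.coeff_natDegree
    rw [this, one_mul]
  have hA22tri : A22.BlockTriangular id := by
    intro i j hij
    simp only [hA22, Matrix.of_apply]
    apply coeff_eq_zero_of_natDegree_lt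
    have : (j : ℕ) < (i : ℕ) := hij
    omega
  have hdetA22 : A22.det = (d : F) ^ d := by
    rw [Matrix.det_of_upperTriangular hA22tri]
    have hdiag : ∀ i : Fin d, A22 i i = (d : F) := by
      intro i
      simp only [hA22, Matrix.of_apply]
      have : d - 1 + (i:ℕ) - (i:ℕ) = d - 1 := by omega
      rw [this, hcoeffder]
    simp [hdiag]
  letI : Invertible A22 :=
    A22.invertibleOfIsUnitDet (by rw [hdetA22]; exact (pow_ne_zero d hdF).isUnit)
  letI : Invertible (A22.map (Polynomial.C : F → Polynomial F)) :=
    Invertible.map ((Polynomial.C : F →+* Polynomial F).mapMatrix) A22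
  have hf₀coeff : ∀ k : ℕ, f₀.coeff k
      = Polynomial.C (g.coeff k) + if k = 0 then Polynomial.C c * Polynomial.X else 0 := by
    intro k
    simp [hf₀, coeff_map, coeff_add, Polynomial.coeff_C]
  have hg₀coeff : ∀ k : ℕ, g₀.coeff k = Polynomial.C ((derivative g).coeff k) := by
    intro k; simp [hg₀, coeff_map]
  set e : Fin (d-1) ⊕ Fin d ≃ Fin (d + (d-1)) :=
    finSumFinEquiv.trans (finCongr (by omega : (d-1) + d = d + (d-1))) with he
  have he1 : ∀ i : Fin (d-1), ((e (Sum.inl i)) : ℕ) = (i : ℕ) := by intro i; simp [he]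
  have he2 : ∀ i : Fin d, ((e (Sum.inr i)) : ℕ) = d - 1 + (i : ℕ) := by
    intro i; simp [he]; omega
  set B11 : Matrix (Fin (d-1)) (Fin (d-1)) (Polynomial F) :=
    A11.map Polynomial.C + (Polynomial.C c * Polynomial.X) • 1 with hB11
  have hblocks : M.submatrix e e
      = Matrix.fromBlocks B11 (A12.map Polynomial.C) (A21.map Polynomial.C)
          (A22.map Polynomial.C) := by
    refine Matrix.ext ?_
    rintro (i | i) (j | j) <;>
      simp only [Matrix.submatrix_apply, Matrix.fromBlocks_apply₁₁, Matrix.fromBlocks_apply₁₂,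
        Matrix.fromBlocks_apply₂₁, Matrix.fromBlocks_apply₂₂, hM, sylvesterMatrix,
        Matrix.of_apply, he1, he2, Matrix.map_apply]
    · -- inl inl
      rw [if_pos j.isLt]
      simp only [hB11, Matrix.add_apply, Matrix.map_apply, Matrix.smul_apply, Matrix.one_apply,
        hA11, Matrix.of_apply, smul_eq_mul]
      by_cases hle : (j : ℕ) ≤ (i : ℕ)
      · rw [if_pos hle, hf₀coeff, if_pos hle]
        by_cases heq : i = j
        · subst heq
          simp
        · have hne : (i:ℕ) ≠ (j:ℕ) := fun h => heq (Fin.ext h)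
          rw [if_neg (by omega : ¬ ((i:ℕ) - (j:ℕ) = 0)), if_neg heq, mul_zero, add_zero]
      · have heq : ¬ i = j := fun h => hle (le_of_eq (congrArg Fin.val h.symm))
        rw [if_neg hle, if_neg hle, if_neg heq, mul_zero, add_zero, map_zero]
    · -- inl inr
      rw [if_neg (by omega : ¬ (d - 1 + (j:ℕ) < d - 1))]
      have h3 : d - 1 + (j:ℕ) - (d - 1) = (j:ℕ) := by omega
      rw [h3]
      simp only [hA12, Matrix.of_apply]
      by_cases hle : (j : ℕ) ≤ (i : ℕ)
      · rw [if_pos hle, if_pos hle, hg₀coeff]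
      · rw [if_neg hle, if_neg hle, map_zero]
    · -- inr inl
      rw [if_pos j.isLt]
      have hle : (j : ℕ) ≤ d - 1 + (i:ℕ) := by have := j.isLt; omega
      rw [if_pos hle, hf₀coeff]
      have : ¬ (d - 1 + (i:ℕ) - (j:ℕ) = 0) := by have := j.isLt; omega
      rw [if_neg this, add_zero]
      simp only [hA21, Matrix.of_apply]
    · -- inr inr
      rw [if_neg (by omega : ¬ (d - 1 + (j:ℕ) < d - 1))]
      have h3 : d - 1 + (j:ℕ) - (d - 1) = (j:ℕ) := by omega
      rw [h3, if_pos (by omega : (j:ℕ) ≤ d - 1 + (i:ℕ)), hg₀coeff]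
      simp only [hA22, Matrix.of_apply]
  set G : Matrix (Fin (d-1)) (Fin (d-1)) F := A12 * ⅟A22 * A21 with hG
  set K : Matrix (Fin (d-1)) (Fin (d-1)) F := A11 - G with hK
  set L : Matrix (Fin (d-1)) (Fin (d-1)) F := (-(c⁻¹)) • K with hL
  have hinv : ⅟(A22.map (Polynomial.C : F → Polynomial F)) = (⅟A22).map Polynomial.C := rfl
  have hmulmap : (A12.map Polynomial.C) * ⅟(A22.map (Polynomial.C : F → Polynomial F))
        * (A21.map Polynomial.C) = G.map Polynomial.C := by
    rw [hinv, hG, Matrix.map_mul, Matrix.map_mul]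
  have hschur : B11 - (A12.map Polynomial.C) * ⅟(A22.map (Polynomial.C : F → Polynomial F))
        * (A21.map Polynomial.C) = (Polynomial.C c) • charmatrix L := by
    rw [hmulmap]
    refine Matrix.ext ?_
    intro i j
    by_cases hij : i = j
    · subst hij
      simp only [hB11, Matrix.sub_apply, Matrix.add_apply, Matrix.map_apply, Matrix.smul_apply,
        Matrix.one_apply_eq, charmatrix_apply_eq, hL, hK, Matrix.sub_apply, smul_eq_mul, mul_one]
      rw [mul_sub, ← Polynomial.C_mul]
      have hm : c * (-(c⁻¹) * (A11 i i - G i i)) = -(A11 i i - G i i) := by field_simp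
      rw [hm, map_neg, sub_neg_eq_add, map_sub]
      ring
    · simp only [hB11, Matrix.sub_apply, Matrix.add_apply, Matrix.map_apply, Matrix.smul_apply,
        Matrix.one_apply_ne hij, charmatrix_apply_ne _ _ _ hij, hL, hK, Matrix.sub_apply,
        smul_eq_mul, mul_zero, add_zero]
      rw [← map_neg, ← Polynomial.C_mul]
      have hm : c * -(-(c⁻¹) * (A11 i j - G i j)) = A11 i j - G i j := by field_simp
      rw [hm, map_sub]
  have hdet2 : ((Polynomial.C c) • charmatrix L).det = Polynomial.C c ^ (d-1) * L.charpoly := by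
    rw [Matrix.det_smul, Fintype.card_fin]
    rfl
  have hfinal : M.det = Polynomial.C ((d:F)^d * c^(d-1)) * L.charpoly := by
    have hdetmap : (A22.map (Polynomial.C : F → Polynomial F)).det = Polynomial.C (A22.det) :=
      ((Polynomial.C : F →+* Polynomial F).map_det A22).symm
    rw [← Matrix.det_submatrix_equiv_self e M, hblocks, Matrix.det_fromBlocks₂₂, hschur, hdet2,
      hdetmap, hdetA22, Polynomial.C_mul, Polynomial.C_pow, Polynomial.C_pow]
    ring
  refine ⟨L.charpoly, L.charpoly_monic, ?_, hfinal⟩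
  rw [Matrix.charpoly_natDegree_eq_dim, Fintype.card_fin]

open Polynomial Matrix in
theorem sylvesterMatrix_map {R S : Type*} [CommRing R] [CommRing S] (φ : R →+* S)
    (d₁ d₂ : ℕ) (f g : Polynomial R) :
    (sylvesterMatrix d₁ d₂ f g).map φ = sylvesterMatrix d₁ d₂ (f.map φ) (g.map φ) := by
  refine Matrix.ext ?_
  intro i j
  simp [sylvesterMatrix, Matrix.map_apply, apply_ite φ, Polynomial.coeff_map]

/-- **The resultant `Res(ḡ + c·t, ḡ′)` is a polynomial of degree `d−1` in `t` with
leading coefficient `c^(d−1)·d^d`.**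
Let `d ≥ 1` and let `F` be a field of characteristic zero or greater than `d`. Let
`ḡ ∈ F[y]` be monic of degree `d` and let `c ∈ F` be nonzero. Then the resultant in `y`
over `F(t)` of `ḡ + c·t` and the derivative `ḡ′` lies in `F[t]`, has degree exactly
`d−1` in `t` (in particular it is nonzero), and its coefficient of `t^(d−1)` is
`c^(d−1)·d^d`. -/
theorem resultant_add_ct_ne_zero
    (F : Type) [Field F] (d : ℕ) (hd : 1 ≤ d)
    (hchar : ringChar F = 0 ∨ d < ringChar F)
    (g : Polynomial F) (hmonic : g.Monic) (hdeg : g.natDegree = d)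
    (c : F) (hc : c ≠ 0) :
    ∃ P : Polynomial F,
      algebraMap (Polynomial F) (RatFunc F) P
        = resultant
            (g.map (algebraMap F (RatFunc F))
              + Polynomial.C (RatFunc.C c * RatFunc.X))
            ((Polynomial.derivative g).map (algebraMap F (RatFunc F))) ∧
      P.degree = ((d - 1 : ℕ) : WithBot ℕ) ∧
      P.coeff (d - 1) = c ^ (d - 1) * (d : F) ^ d ∧
      resultant
          (g.map (algebraMap F (RatFunc F))
            + Polynomial.C (RatFunc.C c * RatFunc.X))
          ((Polynomial.derivative g).map (algebraMap F (RatFunc F))) ≠ 0 := by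
  classical
  have hdF : (d : F) ≠ 0 := by
    intro h
    haveI := ringChar.charP F
    have hdvd : ringChar F ∣ d := (CharP.cast_eq_zero_iff F (ringChar F) d).1 h
    rcases hchar with h0 | hlt
    · rw [h0] at hdvd
      exact absurd (zero_dvd_iff.1 hdvd) (by omega)
    · exact absurd (Nat.le_of_dvd (by omega) hdvd) (by omega)
  obtain ⟨Q, hQmonic, hQdeg, hQdet⟩ := aux_det F d hd hdF g hmonic hdeg c hc
  have hψinj : Function.Injective (algebraMap F (RatFunc F)) :=
    (algebraMap F (RatFunc F)).injective
  have hφinj : Function.Injective (algebraMap (Polynomial F) (RatFunc F)) :=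
    IsFractionRing.injective (Polynomial F) (RatFunc F)
  set f₀ : Polynomial (Polynomial F) :=
    g.map Polynomial.C + Polynomial.C (Polynomial.C c * Polynomial.X) with hf₀
  set g₀ : Polynomial (Polynomial F) := (Polynomial.derivative g).map Polynomial.C with hg₀
  set f₁ : Polynomial (RatFunc F) :=
    g.map (algebraMap F (RatFunc F)) + Polynomial.C (RatFunc.C c * RatFunc.X) with hf₁
  set g₁ : Polynomial (RatFunc F) :=
    (Polynomial.derivative g).map (algebraMap F (RatFunc F)) with hg₁
  have hcomp : (algebraMap (Polynomial F) (RatFunc F)).comp Polynomial.C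
      = algebraMap F (RatFunc F) := by
    ext a
    simp [RatFunc.algebraMap_C, RatFunc.algebraMap_eq_C]
  have hf₁eq : f₀.map (algebraMap (Polynomial F) (RatFunc F)) = f₁ := by
    rw [hf₀, Polynomial.map_add, Polynomial.map_map, hcomp, Polynomial.map_C, map_mul,
      RatFunc.algebraMap_C, RatFunc.algebraMap_X, hf₁]
  have hg₁eq : g₀.map (algebraMap (Polynomial F) (RatFunc F)) = g₁ := by
    rw [hg₀, Polynomial.map_map, hcomp, hg₁]
  have hmap1 : (g.map (algebraMap F (RatFunc F))).natDegree = d := by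
    rw [Polynomial.natDegree_map_eq_of_injective hψinj, hdeg]
  have hmapne : g.map (algebraMap F (RatFunc F)) ≠ 0 :=
    (hmonic.map (algebraMap F (RatFunc F))).ne_zero
  have hmapdeg : (g.map (algebraMap F (RatFunc F))).degree = (d : ℕ) := by
    rw [Polynomial.degree_eq_natDegree hmapne, hmap1]
  have hClt : (Polynomial.C (RatFunc.C c * RatFunc.X)).degree
      < (g.map (algebraMap F (RatFunc F))).degree := by
    refine lt_of_le_of_lt Polynomial.degree_C_le ?_
    rw [hmapdeg]
    exact_mod_cast (by omega : 0 < d)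
  have hdegf₁ : f₁.degree = (d : ℕ) := by
    rw [hf₁, Polynomial.degree_add_eq_left_of_degree_lt hClt, hmapdeg]
  have hndegf₁ : f₁.natDegree = d := Polynomial.natDegree_eq_of_degree_eq_some hdegf₁
  have hcoeffder : (Polynomial.derivative g).coeff (d - 1) = (d : F) := by
    rw [Polynomial.coeff_derivative]
    have h1 : d - 1 + 1 = d := by omega
    have h2 : ((d - 1 : ℕ) : F) + 1 = (d : F) := by
      have : (((d - 1) + 1 : ℕ) : F) = (d : F) := by rw [h1]
      push_cast at this
      exact_mod_cast this
    rw [h2]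
    have : g.coeff (d - 1 + 1) = 1 := by rw [h1, ← hdeg]; exact hmonic.coeff_natDegree
    rw [this, one_mul]
  have hder : (Polynomial.derivative g).natDegree = d - 1 := by
    refine le_antisymm (by simpa [hdeg] using g.natDegree_derivative_le) ?_
    exact Polynomial.le_natDegree_of_ne_zero (by rw [hcoeffder]; exact hdF)
  have hndegg₁ : g₁.natDegree = d - 1 := by
    rw [hg₁, Polynomial.natDegree_map_eq_of_injective hψinj, hder]
  have hres : algebraMap (Polynomial F) (RatFunc F)
      ((sylvesterMatrix d (d - 1) f₀ g₀).det) = resultant f₁ g₁ := by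
    rw [RingHom.map_det, RingHom.mapMatrix_apply, sylvesterMatrix_map, hf₁eq, hg₁eq,
      resultant, hndegf₁, hndegg₁]
  have ha : ((d : F) ^ d * c ^ (d - 1)) ≠ 0 :=
    mul_ne_zero (pow_ne_zero _ hdF) (pow_ne_zero _ hc)
  refine ⟨Polynomial.C ((d : F) ^ d * c ^ (d - 1)) * Q, ?_, ?_, ?_, ?_⟩
  · rw [← hQdet]
    exact hres
  · rw [Polynomial.degree_mul, Polynomial.degree_C ha,
      Polynomial.degree_eq_natDegree hQmonic.ne_zero, hQdeg, zero_add]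
  · rw [Polynomial.coeff_C_mul]
    have : Q.coeff (d - 1) = 1 := by rw [← hQdeg]; exact hQmonic.coeff_natDegree
    rw [this, mul_one, mul_comm]
  · have hPne : Polynomial.C ((d : F) ^ d * c ^ (d - 1)) * Q ≠ 0 :=
      mul_ne_zero (Polynomial.C_ne_zero.mpr ha) hQmonic.ne_zero
    intro h0
    apply hPne
    apply hφinj
    rw [map_zero, ← h0, ← hQdet]
    exact hres
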